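/- For each n ≥ 1 consider the linear model Y^(n) = X^(n)β + ε^(n) with X^(n) ∈ ℝ^{n×p} deterministic of rank p, ε^(n) ~ N(0, σ²I_n), and assume n^{-1}(X^(n))′X^(n) → C for a positive definite matrix C. Let β̂^SLOPE_n be the SLOPE estimator with tuning vector Λ^(n). If λ₁^(n)/n → λ₀ > 0, then the sequence β̂^SLOPE_n is not strongly consistent: for any nonzero β with λ₀‖β‖_∞ > β′Cβ/2, it is not the case that β̂^SLOPE_n → β almost surely. -/

import Mathlib

open Matrix MeasureTheory ProbabilityTheory Filter Topology

/-- The SLOPE (sorted ℓ₁) norm `J_Λ(b) = ∑ Λᵢ |b|₍ᵢ₎`, expressed (for `Λ` sorted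
in decreasing order) as the maximum over permutations of `∑ Λᵢ |b (σ i)|`. -/
noncomputable def slopeNorm {p : ℕ} (Λ : Fin p → ℝ) (b : Fin p → ℝ) : ℝ :=
  ⨆ σ : Equiv.Perm (Fin p), ∑ i, Λ i * |b (σ i)|

/-- The SLOPE objective function `b ↦ ½‖Y - Xb‖₂² + J_Λ(b)`. -/
noncomputable def slopeObj {n p : ℕ} (X : Matrix (Fin n) (Fin p) ℝ) (Y : Fin n → ℝ)
    (Λ : Fin p → ℝ) (b : Fin p → ℝ) : ℝ :=
  (1 / 2) * ∑ i, (Y i - (X *ᵥ b) i) ^ 2 + slopeNorm Λ b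

section Aux

open Real
open scoped NNReal ENNReal

lemma slopeNorm_zero {p : ℕ} (Λ : Fin p → ℝ) : slopeNorm Λ 0 = 0 := by
  unfold slopeNorm; simp

lemma le_slopeNorm {p : ℕ} (hp : 0 < p) (Λ : Fin p → ℝ) (hnn : ∀ i, 0 ≤ Λ i)
    (b : Fin p → ℝ) (j : Fin p) : Λ ⟨0, hp⟩ * |b j| ≤ slopeNorm Λ b := by
  have h1 : Λ ⟨0, hp⟩ * |b j| ≤ ∑ i, Λ i * |b (Equiv.swap ⟨0, hp⟩ j i)| := by
    have := Finset.single_le_sum (f := fun i => Λ i * |b (Equiv.swap ⟨0, hp⟩ j i)|)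
      (fun i _ => mul_nonneg (hnn i) (abs_nonneg _)) (Finset.mem_univ ⟨0, hp⟩)
    simpa [Equiv.swap_apply_left] using this
  exact h1.trans (le_ciSup (f := fun σ : Equiv.Perm (Fin p) => ∑ i, Λ i * |b (σ i)|)
    (Set.Finite.bddAbove (Set.finite_range _)) _)

lemma sum_sq_add {n : ℕ} (u w : Fin n → ℝ) :
    ∑ i, (u i + w i) ^ 2 = u ⬝ᵥ u + 2 * (u ⬝ᵥ w) + w ⬝ᵥ w :=
  calc ∑ i, (u i + w i) ^ 2
      = ∑ i, (u i * u i + 2 * (u i * w i) + w i * w i) :=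
        Finset.sum_congr rfl fun i _ => by ring
    _ = (∑ i, u i * u i) + 2 * (∑ i, u i * w i) + ∑ i, w i * w i := by
        rw [Finset.sum_add_distrib, Finset.sum_add_distrib, Finset.mul_sum]
    _ = u ⬝ᵥ u + 2 * (u ⬝ᵥ w) + w ⬝ᵥ w := rfl

/-- The basic deterministic inequality obtained by comparing the SLOPE objective at the
minimizer `b` with its value at `0`. -/
lemma slope_key_ineq {n p : ℕ} (hp : 0 < p) (A : Matrix (Fin n) (Fin p) ℝ)
    (e : Fin n → ℝ) (β b : Fin p → ℝ) (Λv : Fin p → ℝ) (hnn : ∀ i, 0 ≤ Λv i)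
    (h0 : slopeObj A (A *ᵥ β + e) Λv b ≤ slopeObj A (A *ᵥ β + e) Λv 0) (j : Fin p) :
    Λv ⟨0, hp⟩ * |b j| ≤ β ⬝ᵥ ((Aᵀ * A) *ᵥ β) / 2 + (Aᵀ *ᵥ e) ⬝ᵥ b := by
  set d : Fin p → ℝ := β - b with hd
  unfold slopeObj at h0
  rw [slopeNorm_zero, Matrix.mulVec_zero] at h0
  have hL : ∀ i, (A *ᵥ β + e) i - (A *ᵥ b) i = (A *ᵥ d) i + e i := by
    intro i
    simp only [hd, Matrix.mulVec_sub, Pi.add_apply, Pi.sub_apply]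
    ring
  have hR : ∀ i, (A *ᵥ β + e) i - (0 : Fin n → ℝ) i = (A *ᵥ β) i + e i := by
    intro i; simp
  simp_rw [hL, hR, sum_sq_add] at h0
  have hAd : 0 ≤ (A *ᵥ d) ⬝ᵥ (A *ᵥ d) := Finset.sum_nonneg fun i _ => mul_self_nonneg _
  have hJb : slopeNorm Λv b
      ≤ (A *ᵥ β) ⬝ᵥ (A *ᵥ β) / 2 + ((A *ᵥ β) ⬝ᵥ e - (A *ᵥ d) ⬝ᵥ e) := by nlinarith
  have hsplit : (A *ᵥ β) ⬝ᵥ e - (A *ᵥ d) ⬝ᵥ e = (A *ᵥ b) ⬝ᵥ e := by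
    rw [← sub_dotProduct, ← Matrix.mulVec_sub, hd, sub_sub_cancel]
  have htrans1 : (A *ᵥ b) ⬝ᵥ e = (Aᵀ *ᵥ e) ⬝ᵥ b := by
    rw [dotProduct_comm, Matrix.dotProduct_mulVec, ← Matrix.mulVec_transpose]
  have htrans2 : (A *ᵥ β) ⬝ᵥ (A *ᵥ β) = β ⬝ᵥ ((Aᵀ * A) *ᵥ β) := by
    rw [Matrix.dotProduct_mulVec, ← Matrix.mulVec_transpose, ← Matrix.mulVec_mulVec,
      dotProduct_comm]
  have hfin := (le_slopeNorm hp Λv hnn b j).trans hJb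
  rw [hsplit, htrans1, htrans2] at hfin
  exact hfin

/-- Second moment of the centered Gaussian distribution. -/
noncomputable def gaussM2 (v : ℝ≥0) : ℝ := ∫ t, t ^ 2 ∂(gaussianReal 0 v)

lemma gaussM2_nonneg (v : ℝ≥0) : 0 ≤ gaussM2 v :=
  integral_nonneg fun t => sq_nonneg t

lemma gaussianReal_integrable_aux (v : ℝ≥0) (hv : v ≠ 0) {g h : ℝ → ℝ}
    (hh : Integrable h) (hgh : ∀ x, g x * gaussianPDFReal 0 v x = h x) :
    Integrable g (gaussianReal 0 v) := by
  rw [gaussianReal_of_var_ne_zero 0 hv, gaussianPDF_def]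
  rw [integrable_withDensity_iff ((measurable_gaussianPDFReal 0 v).ennreal_ofReal)
      (ae_of_all _ fun x => ENNReal.ofReal_lt_top)]
  simp_rw [ENNReal.toReal_ofReal (gaussianPDFReal_nonneg 0 v _)]
  exact hh.congr (ae_of_all _ fun x => (hgh x).symm)

lemma integrable_id_gauss (v : ℝ≥0) (hv : v ≠ 0) :
    Integrable (fun x => x) (gaussianReal 0 v) := by
  have hb : 0 < (2 * (v : ℝ))⁻¹ := by positivity
  refine gaussianReal_integrable_aux v hv
    (h := fun x => (√(2 * π * (v : ℝ)))⁻¹ * (x * rexp (-(2 * (v : ℝ))⁻¹ * x ^ 2)))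
    (((integrable_mul_exp_neg_mul_sq hb).const_mul _)) (fun x => ?_)
  unfold gaussianPDFReal
  rw [sub_zero, show -x ^ 2 / (2 * (v : ℝ)) = -(2 * (v : ℝ))⁻¹ * x ^ 2 by ring]
  ring

lemma integrable_sq_gauss (v : ℝ≥0) (hv : v ≠ 0) :
    Integrable (fun x => x ^ 2) (gaussianReal 0 v) := by
  have hb : 0 < (2 * (v : ℝ))⁻¹ := by positivity
  have h2 := (integrable_rpow_mul_exp_neg_mul_sq hb (by norm_num : (-1:ℝ) < 2)).const_mul
    (√(2 * π * (v : ℝ)))⁻¹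
  simp_rw [show ∀ x : ℝ, x ^ (2:ℝ) = x ^ 2 from fun x => by
    rw [show (2:ℝ) = ((2:ℕ):ℝ) by norm_num, Real.rpow_natCast]] at h2
  refine gaussianReal_integrable_aux v hv (hh := h2) (fun x => ?_)
  unfold gaussianPDFReal
  rw [sub_zero, show -x ^ 2 / (2 * (v : ℝ)) = -(2 * (v : ℝ))⁻¹ * x ^ 2 by ring]
  ring

lemma integral_id_gauss (v : ℝ≥0) (hv : v ≠ 0) :
    ∫ x, x ∂(gaussianReal 0 v) = 0 := by
  have hone : (⟨(-1:ℝ)^2, sq_nonneg _⟩ : NNReal) = 1 := by ext; norm_num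
  have hmap : (gaussianReal 0 v).map (fun x => (-1 : ℝ) * x) = gaussianReal 0 v := by
    rw [gaussianReal_map_const_mul (-1)]
    congr 1
    · ring
    · ext; simp
  have h1 : ∫ x, x ∂(gaussianReal 0 v) = ∫ x, (-1 : ℝ) * x ∂(gaussianReal 0 v) := by
    conv_lhs => rw [← hmap]
    exact integral_map (by fun_prop) aestronglyMeasurable_id
  have h2 : ∫ x, (-1 : ℝ) * x ∂(gaussianReal 0 v) = -∫ x, x ∂(gaussianReal 0 v) := by
    simp_rw [neg_one_mul]
    exact integral_neg _
  linarith [h1, h2]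

lemma gauss_integrable_pair {m : ℕ} {v : ℝ≥0} (hv : v ≠ 0) (i k : Fin m) :
    Integrable (fun x : Fin m → ℝ => x i * x k)
      (Measure.pi fun _ => gaussianReal 0 v) := by
  letI : MeasureSpace ℝ := ⟨gaussianReal 0 v⟩
  haveI hPvol : IsProbabilityMeasure (volume : Measure ℝ) :=
    inferInstanceAs (IsProbabilityMeasure (gaussianReal 0 v))
  have hpi : Measure.pi (fun _ : Fin m => gaussianReal 0 v) = (volume : Measure (Fin m → ℝ)) :=
    volume_pi.symm
  rw [hpi]
  have hint1 : Integrable (fun t : ℝ => t) (volume : Measure ℝ) := integrable_id_gauss v hv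
  have key := Integrable.fintype_prod (𝕜 := ℝ)
    (f := fun j (t : ℝ) => (if j = i then t else 1) * (if j = k then t else 1))
    (fun j => by
      by_cases h1 : j = i
      · by_cases h2 : j = k
        · simp only [if_pos h1, if_pos h2]
          exact (integrable_sq_gauss v hv).congr (ae_of_all _ fun t => pow_two t)
        · simp only [if_pos h1, if_neg h2, mul_one]; exact hint1
      · by_cases h2 : j = k
        · simp only [if_neg h1, if_pos h2, one_mul]; exact hint1
        · simp only [if_neg h1, if_neg h2, mul_one]; exact integrable_const 1)
  refine key.congr (ae_of_all _ fun x => ?_)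
  show (∏ j, (if j = i then x j else 1) * (if j = k then x j else 1)) = x i * x k
  rw [Finset.prod_mul_distrib, Finset.prod_ite_eq', Finset.prod_ite_eq']
  simp

lemma gauss_integral_pair {m : ℕ} {v : ℝ≥0} (hv : v ≠ 0) (i k : Fin m) :
    ∫ x : Fin m → ℝ, x i * x k ∂(Measure.pi fun _ => gaussianReal 0 v)
      = if i = k then gaussM2 v else 0 := by
  letI : MeasureSpace ℝ := ⟨gaussianReal 0 v⟩
  haveI hPvol : IsProbabilityMeasure (volume : Measure ℝ) :=
    inferInstanceAs (IsProbabilityMeasure (gaussianReal 0 v))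
  have hpi : Measure.pi (fun _ : Fin m => gaussianReal 0 v) = (volume : Measure (Fin m → ℝ)) :=
    volume_pi.symm
  rw [hpi]
  have hpoint : ∀ x : Fin m → ℝ,
      x i * x k = ∏ j, (if j = i then x j else 1) * (if j = k then x j else 1) := by
    intro x
    rw [Finset.prod_mul_distrib, Finset.prod_ite_eq', Finset.prod_ite_eq']
    simp
  simp_rw [hpoint]
  rw [volume_pi, integral_fintype_prod_eq_prod (ι := Fin m)
    (f := fun j (t : ℝ) => (if j = i then t else 1) * (if j = k then t else 1))]
  rcases eq_or_ne i k with rfl | hik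
  · rw [if_pos rfl]
    have hval : ∀ j : Fin m,
        (∫ t : ℝ, (if j = i then t else 1) * (if j = i then t else 1))
          = if j = i then gaussM2 v else 1 := by
      intro j
      by_cases h : j = i
      · simp only [if_pos h]
        have : (fun t : ℝ => t * t) = fun t : ℝ => t ^ 2 := by funext t; ring
        rw [this]
        rfl
      · simp only [if_neg h, mul_one]
        simp
    rw [Finset.prod_congr rfl (fun j _ => hval j), Finset.prod_ite_eq']
    simp
  · rw [if_neg hik]
    refine Finset.prod_eq_zero (Finset.mem_univ i) ?_
    simp only [if_pos rfl, if_neg hik, mul_one]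
    exact integral_id_gauss v hv

lemma integral_sq_sum_pi {m : ℕ} {v : ℝ≥0} (hv : v ≠ 0) (a : Fin m → ℝ) :
    ∫ x : Fin m → ℝ, (∑ i, a i * x i) ^ 2 ∂(Measure.pi fun _ => gaussianReal 0 v)
      = (∑ i, a i ^ 2) * gaussM2 v := by
  set Q := Measure.pi (fun _ : Fin m => gaussianReal 0 v) with hQ
  have hexp : ∀ x : Fin m → ℝ,
      (∑ i, a i * x i) ^ 2 = ∑ i, ∑ k, (a i * a k) * (x i * x k) := by
    intro x
    rw [sq, Finset.sum_mul_sum]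
    exact Finset.sum_congr rfl fun i _ => Finset.sum_congr rfl fun k _ => by ring
  simp_rw [hexp]
  rw [integral_finset_sum _ (fun i _ =>
    integrable_finset_sum _ (fun k _ => (gauss_integrable_pair hv i k).const_mul _))]
  have : ∀ i : Fin m, (∫ x : Fin m → ℝ, ∑ k, (a i * a k) * (x i * x k) ∂Q)
      = ∑ k, (a i * a k) * ∫ x : Fin m → ℝ, x i * x k ∂Q := by
    intro i
    rw [integral_finset_sum _ (fun k _ => (gauss_integrable_pair hv i k).const_mul _)]
    exact Finset.sum_congr rfl fun k _ => integral_const_mul _ _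
  rw [Finset.sum_congr rfl fun i _ => this i]
  simp_rw [hQ, gauss_integral_pair hv, mul_ite, mul_zero, Finset.sum_ite_eq, Finset.mem_univ, if_pos]
  rw [Finset.sum_mul]
  exact Finset.sum_congr rfl fun i _ => by ring

/-- Chebyshev-type bound for a linear functional of i.i.d. centered Gaussians. -/
lemma gauss_cheb {m : ℕ} {v : ℝ≥0} (hv : v ≠ 0) (a : Fin m → ℝ) {δ : ℝ} (hδ : 0 < δ) :
    (Measure.pi fun _ : Fin m => gaussianReal 0 v) {x | δ ≤ |∑ i, a i * x i|}
      ≤ ENNReal.ofReal ((∑ i, a i ^ 2) * gaussM2 v / δ ^ 2) := by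
  set Q := Measure.pi (fun _ : Fin m => gaussianReal 0 v) with hQ
  haveI : IsProbabilityMeasure Q := by rw [hQ]; infer_instance
  have hg2int : Integrable (fun x : Fin m → ℝ => (∑ i, a i * x i) ^ 2) Q := by
    have hexp : ∀ x : Fin m → ℝ,
        (∑ i, a i * x i) ^ 2 = ∑ i, ∑ k, (a i * a k) * (x i * x k) := by
      intro x
      rw [sq, Finset.sum_mul_sum]
      exact Finset.sum_congr rfl fun i _ => Finset.sum_congr rfl fun k _ => by ring
    simp_rw [hexp]
    exact integrable_finset_sum _ (fun i _ =>
      integrable_finset_sum _ (fun k _ => (gauss_integrable_pair hv i k).const_mul _))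
  have hcheb := mul_meas_ge_le_integral_of_nonneg (μ := Q)
    (ae_of_all _ fun x => sq_nonneg (∑ i, a i * x i)) hg2int (δ ^ 2)
  rw [integral_sq_sum_pi hv a] at hcheb
  have hset : {x : Fin m → ℝ | δ ≤ |∑ i, a i * x i|}
      = {x : Fin m → ℝ | δ ^ 2 ≤ (∑ i, a i * x i) ^ 2} := by
    ext x
    simp only [Set.mem_setOf_eq]
    rw [← sq_abs (∑ i, a i * x i), pow_le_pow_iff_left₀ hδ.le (abs_nonneg _) two_ne_zero]
  rw [hset]
  have h1 : (Q {x : Fin m → ℝ | δ ^ 2 ≤ (∑ i, a i * x i) ^ 2}).toReal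
      ≤ (∑ i, a i ^ 2) * gaussM2 v / δ ^ 2 := by
    rw [le_div_iff₀ (by positivity)]
    rw [measureReal_def] at hcheb
    linarith [hcheb]
  calc Q {x : Fin m → ℝ | δ ^ 2 ≤ (∑ i, a i * x i) ^ 2}
      = ENNReal.ofReal ((Q {x : Fin m → ℝ | δ ^ 2 ≤ (∑ i, a i * x i) ^ 2}).toReal) :=
        (ENNReal.ofReal_toReal (measure_ne_top Q _)).symm
    _ ≤ _ := ENNReal.ofReal_le_ofReal h1

end Aux

open scoped NNReal ENNReal

/-- Failure of strong consistency of SLOPE when `λ₁⁽ⁿ⁾/n → λ₀ > 0`. -/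
theorem slope_not_strongly_consistent {Ω : Type*} [MeasurableSpace Ω]
    (P : Measure Ω) [IsProbabilityMeasure P] {p : ℕ} (hp : 0 < p)
    (X : (n : ℕ) → Matrix (Fin (n + 1)) (Fin p) ℝ)
    (hrank : ∀ n, p ≤ n + 1 → (X n).rank = p)
    (σ : NNReal) (hσ : 0 < σ)
    (ε : (n : ℕ) → Ω → (Fin (n + 1) → ℝ))
    (hε : ∀ n, Measure.map (ε n) P =
      Measure.pi (fun _ : Fin (n + 1) => gaussianReal 0 (σ ^ 2)))
    (β : Fin p → ℝ) (hβne : β ≠ 0)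
    (Y : (n : ℕ) → Ω → (Fin (n + 1) → ℝ))
    (hY : ∀ n ω, Y n ω = X n *ᵥ β + ε n ω)
    (C : Matrix (Fin p) (Fin p) ℝ) (hC : C.PosDef)
    (hlim : Tendsto (fun n : ℕ => (1 / ((n : ℝ) + 1)) • ((X n)ᵀ * X n)) atTop (𝓝 C))
    (Λ : ℕ → Fin p → ℝ) (hΛanti : ∀ n, Antitone (Λ n))
    (hΛnonneg : ∀ n i, 0 ≤ Λ n i) (hlam1 : ∀ n, 0 < Λ n ⟨0, hp⟩)
    (lam0 : ℝ) (hlam0 : 0 < lam0)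
    (hlamn : Tendsto (fun n : ℕ => Λ n ⟨0, hp⟩ / ((n : ℝ) + 1)) atTop (𝓝 lam0))
    (hβ : β ⬝ᵥ (C *ᵥ β) / 2 < lam0 * ⨆ i, |β i|)
    (βS : (n : ℕ) → Ω → (Fin p → ℝ))
    (hβS : ∀ n ω b, slopeObj (X n) (Y n ω) (Λ n) (βS n ω) ≤ slopeObj (X n) (Y n ω) (Λ n) b) :
    ¬ (∀ᵐ ω ∂P, Tendsto (fun n => βS n ω) atTop (𝓝 β)) := by
  intro hcon
  haveI : Nonempty (Fin p) := ⟨⟨0, hp⟩⟩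
  set v : ℝ≥0 := σ ^ 2 with hvdef
  have hv : v ≠ 0 := pow_ne_zero _ hσ.ne'
  have hεae : ∀ n, AEMeasurable (ε n) P := fun n =>
    aemeasurable_of_map_neZero (by rw [hε n]; infer_instance)
  set Mn : ℕ → Matrix (Fin p) (Fin p) ℝ :=
    fun n => (1 / ((n : ℝ) + 1)) • ((X n)ᵀ * X n) with hMn
  set V : ℕ → Ω → (Fin p → ℝ) :=
    fun n ω => (1 / ((n : ℝ) + 1)) • ((X n)ᵀ *ᵥ ε n ω) with hVdef
  have hent : ∀ a b : Fin p, Tendsto (fun n => Mn n a b) atTop (𝓝 (C a b)) := fun a b =>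
    ((continuous_apply b).tendsto (C a)).comp (((continuous_apply a).tendsto C).comp hlim)
  -- Chebyshev bound for each coordinate of V
  have hVj : ∀ (n : ℕ) (j : Fin p) (δ : ℝ), 0 < δ →
      P {ω | δ ≤ |V n ω j|}
        ≤ ENNReal.ofReal (Mn n j j * gaussM2 v / δ ^ 2 * (1 / ((n : ℝ) + 1))) := by
    intro n j δ hδ
    have hn1 : (0:ℝ) < (n : ℝ) + 1 := by positivity
    have hVeq : ∀ ω, V n ω j = (1 / ((n : ℝ) + 1)) * ∑ i, X n i j * ε n ω i := by
      intro ω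
      simp only [hVdef, Pi.smul_apply, smul_eq_mul, Matrix.mulVec, dotProduct,
        Matrix.transpose_apply]
    have hsetEq : {ω | δ ≤ |V n ω j|}
        = ε n ⁻¹' {x | δ * ((n : ℝ) + 1) ≤ |∑ i, X n i j * x i|} := by
      ext ω
      simp only [Set.mem_setOf_eq, Set.mem_preimage, hVeq ω]
      rw [abs_mul, abs_of_pos (by positivity : (0:ℝ) < 1 / ((n : ℝ) + 1)), one_div,
        inv_mul_eq_div, le_div_iff₀ hn1]
    have hmeas : MeasurableSet {x : Fin (n+1) → ℝ | δ * ((n : ℝ) + 1) ≤ |∑ i, X n i j * x i|} := by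
      have hm : Measurable fun x : Fin (n+1) → ℝ => |∑ i, X n i j * x i| :=
        (Finset.measurable_sum _ fun i _ => (measurable_pi_apply i).const_mul _).abs
      exact measurableSet_le measurable_const hm
    rw [hsetEq, ← Measure.map_apply_of_aemeasurable (hεae n) hmeas, hε n]
    refine (gauss_cheb hv (fun i => X n i j) (by positivity : (0:ℝ) < δ * ((n : ℝ) + 1))).trans ?_
    apply ENNReal.ofReal_le_ofReal
    have hsum : (∑ i, (X n i j) ^ 2) = ((n : ℝ) + 1) * Mn n j j := by
      simp only [hMn, Matrix.smul_apply, Matrix.mul_apply, Matrix.transpose_apply,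
        smul_eq_mul, pow_two]
      field_simp
    rw [hsum, mul_pow]
    exact le_of_eq (by field_simp)
  -- convergence in measure of V to 0
  have hTIM : TendstoInMeasure P V atTop (fun _ => (0 : Fin p → ℝ)) := by
    refine tendstoInMeasure_iff_dist.2 fun δ hδ => ?_
    have hb : ∀ n, P {ω | δ ≤ dist (V n ω) ((fun _ => (0 : Fin p → ℝ)) ω)}
        ≤ ∑ j : Fin p, ENNReal.ofReal (Mn n j j * gaussM2 v / δ ^ 2 * (1 / ((n : ℝ) + 1))) := by
      intro n
      have hsub : {ω | δ ≤ dist (V n ω) 0} ⊆ ⋃ j : Fin p, {ω | δ ≤ |V n ω j|} := by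
        intro ω hω
        by_contra hc
        simp only [Set.mem_iUnion, Set.mem_setOf_eq, not_exists, not_le] at hc
        have hlt : dist (V n ω) (0 : Fin p → ℝ) < δ := by
          rw [dist_pi_lt_iff hδ]
          intro j
          simpa [Real.dist_eq] using hc j
        exact absurd hω (not_le.mpr hlt)
      calc P {ω | δ ≤ dist (V n ω) 0} ≤ P (⋃ j : Fin p, {ω | δ ≤ |V n ω j|}) :=
            measure_mono hsub
        _ ≤ ∑ j : Fin p, P {ω | δ ≤ |V n ω j|} := measure_iUnion_fintype_le _ _
        _ ≤ _ := Finset.sum_le_sum fun j _ => hVj n j δ hδ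
    have hup : Tendsto (fun n => ∑ j : Fin p,
        ENNReal.ofReal (Mn n j j * gaussM2 v / δ ^ 2 * (1 / ((n : ℝ) + 1)))) atTop (𝓝 0) := by
      have hj0 : ∀ j : Fin p,
          Tendsto (fun n => Mn n j j * gaussM2 v / δ ^ 2 * (1 / ((n : ℝ) + 1))) atTop (𝓝 0) := by
        intro j
        have h1 : Tendsto (fun n => Mn n j j * gaussM2 v / δ ^ 2) atTop
            (𝓝 (C j j * gaussM2 v / δ ^ 2)) := ((hent j j).mul tendsto_const_nhds).div_const _
        have h2 : Tendsto (fun n : ℕ => 1 / ((n : ℝ) + 1)) atTop (𝓝 0) :=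
          tendsto_one_div_add_atTop_nhds_zero_nat
        simpa using h1.mul h2
      have := tendsto_finset_sum Finset.univ
        (fun j (_ : j ∈ Finset.univ) => ENNReal.tendsto_ofReal (hj0 j))
      simpa using this
    exact tendsto_of_tendsto_of_tendsto_of_le_of_le tendsto_const_nhds hup
      (fun n => zero_le) hb
  obtain ⟨ns, hns, hae2⟩ := hTIM.exists_seq_tendsto_ae
  haveI : (ae P).NeBot := IsProbabilityMeasure.ae_neBot
  obtain ⟨ω, hconv, hV0⟩ := (hcon.and hae2).exists
  -- the key deterministic inequality
  have hkey : ∀ (n : ℕ) (j : Fin p), Λ n ⟨0, hp⟩ / ((n : ℝ) + 1) * |βS n ω j|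
      ≤ β ⬝ᵥ (Mn n *ᵥ β) / 2 + V n ω ⬝ᵥ βS n ω := by
    intro n j
    have h0 := hβS n ω 0
    rw [hY n ω] at h0
    have hmain := slope_key_ineq hp (X n) (ε n ω) β (βS n ω) (Λ n) (hΛnonneg n) h0 j
    have hn1 : (0:ℝ) < (n : ℝ) + 1 := by positivity
    have e1 : β ⬝ᵥ (Mn n *ᵥ β) = (1 / ((n : ℝ) + 1)) * (β ⬝ᵥ (((X n)ᵀ * X n) *ᵥ β)) := by
      rw [hMn]
      simp [Matrix.smul_mulVec, dotProduct_smul, smul_eq_mul]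
    have e2 : V n ω ⬝ᵥ βS n ω = (1 / ((n : ℝ) + 1)) * (((X n)ᵀ *ᵥ ε n ω) ⬝ᵥ βS n ω) := by
      rw [hVdef]
      simp [smul_dotProduct, smul_eq_mul]
    calc Λ n ⟨0, hp⟩ / ((n : ℝ) + 1) * |βS n ω j|
        = (1 / ((n : ℝ) + 1)) * (Λ n ⟨0, hp⟩ * |βS n ω j|) := by ring
      _ ≤ (1 / ((n : ℝ) + 1)) * (β ⬝ᵥ (((X n)ᵀ * X n) *ᵥ β) / 2
            + ((X n)ᵀ *ᵥ ε n ω) ⬝ᵥ βS n ω) := by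
          exact mul_le_mul_of_nonneg_left hmain (by positivity)
      _ = β ⬝ᵥ (Mn n *ᵥ β) / 2 + V n ω ⬝ᵥ βS n ω := by rw [e1, e2]; ring
  -- pass to the limit along the subsequence
  obtain ⟨j, hj⟩ := Finite.exists_max (fun i : Fin p => |β i|)
  have hsup : (⨆ i, |β i|) = |β j| :=
    le_antisymm (ciSup_le hj) (le_ciSup (f := fun i => |β i|) (Set.Finite.bddAbove (Set.finite_range _)) j)
  rw [hsup] at hβ
  have hnsT : Tendsto ns atTop atTop := hns.tendsto_atTop
  have h1 : Tendsto (fun k : ℕ => Λ (ns k) ⟨0, hp⟩ / ((ns k : ℝ) + 1) * |βS (ns k) ω j|)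
      atTop (𝓝 (lam0 * |β j|)) := by
    have ha : Tendsto (fun k : ℕ => Λ (ns k) ⟨0, hp⟩ / ((ns k : ℝ) + 1)) atTop (𝓝 lam0) :=
      hlamn.comp hnsT
    have hbj : Tendsto (fun n : ℕ => βS n ω j) atTop (𝓝 (β j)) :=
      ((continuous_apply j).tendsto β).comp hconv
    have hbabs : Tendsto (fun k : ℕ => |βS (ns k) ω j|) atTop (𝓝 (|β j|)) :=
      (continuous_abs.tendsto (β j)).comp (hbj.comp hnsT)
    exact ha.mul hbabs
  have hquad : Tendsto (fun n => β ⬝ᵥ (Mn n *ᵥ β)) atTop (𝓝 (β ⬝ᵥ (C *ᵥ β))) := by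
    simp only [dotProduct, Matrix.mulVec]
    exact tendsto_finset_sum _ fun a _ => tendsto_const_nhds.mul
      (tendsto_finset_sum _ fun b _ => (hent a b).mul tendsto_const_nhds)
  have hcross : Tendsto (fun k : ℕ => V (ns k) ω ⬝ᵥ βS (ns k) ω) atTop (𝓝 0) := by
    have hVj0 : ∀ j' : Fin p, Tendsto (fun k : ℕ => V (ns k) ω j') atTop (𝓝 0) := by
      intro j'
      have := ((continuous_apply j').tendsto (0 : Fin p → ℝ)).comp hV0
      exact this
    have hbj : ∀ j' : Fin p, Tendsto (fun k : ℕ => βS (ns k) ω j') atTop (𝓝 (β j')) :=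
      fun j' => ((continuous_apply j').tendsto β).comp (hconv.comp hnsT)
    have hsum : Tendsto (fun k : ℕ => ∑ j' : Fin p, V (ns k) ω j' * βS (ns k) ω j') atTop
        (𝓝 (∑ j' : Fin p, 0 * β j')) :=
      tendsto_finset_sum _ fun j' _ => (hVj0 j').mul (hbj j')
    simpa [dotProduct] using hsum
  have h2 : Tendsto (fun k : ℕ => β ⬝ᵥ (Mn (ns k) *ᵥ β) / 2 + V (ns k) ω ⬝ᵥ βS (ns k) ω)
      atTop (𝓝 (β ⬝ᵥ (C *ᵥ β) / 2 + 0)) :=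
    (((hquad.comp hnsT).div_const 2).add hcross)
  have hle : lam0 * |β j| ≤ β ⬝ᵥ (C *ᵥ β) / 2 + 0 :=
    le_of_tendsto_of_tendsto' h1 h2 (fun k => hkey (ns k) j)
  rw [add_zero] at hle
  exact absurd hβ (not_lt.mpr hle)
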